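/- The encoding G ↦ G* of finite simple graphs into F_2 Schreier graphs (vertices = directed edges, generator a rotating among edges with common source via chosen cyclic orderings, generator b reversing edges) is injective up to isomorphism: G can be recovered from G* since the vertices of G correspond to a-orbits of V(G*) and two a-orbits are adjacent in G iff some b-orbit of size 2 meets both. -/
import Mathlib


theorem graph_encoding_injective_up_to_iso
    {V₁ V₂ : Type} [Fintype V₁] [Fintype V₂]
    (G₁ : SimpleGraph V₁) (G₂ : SimpleGraph V₂)
    [DecidableRel G₁.Adj] [DecidableRel G₂.Adj]
    (h₁ : G₁.Connected) (h₂ : G₂.Connected)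
    (he₁ : ∃ u v, G₁.Adj u v) (he₂ : ∃ u v, G₂.Adj u v)
    (rot₁ : G₁.Dart → G₁.Dart) (rot₂ : G₂.Dart → G₂.Dart)
    (hsrc₁ : ∀ e : G₁.Dart, (rot₁ e).fst = e.fst)
    (hcyc₁ : ∀ e e' : G₁.Dart, e.fst = e'.fst → ∃ n : ℕ, rot₁^[n] e = e')
    (hsrc₂ : ∀ e : G₂.Dart, (rot₂ e).fst = e.fst)
    (hcyc₂ : ∀ e e' : G₂.Dart, e.fst = e'.fst → ∃ n : ℕ, rot₂^[n] e = e')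
    (Φ : G₁.Dart ≃ G₂.Dart)
    (hΦrot : ∀ e : G₁.Dart, Φ (rot₁ e) = rot₂ (Φ e))
    (hΦsymm : ∀ e : G₁.Dart, Φ e.symm = (Φ e).symm) :
    (∀ e e' : G₁.Dart, (∃ n : ℕ, rot₁^[n] e = e') ↔ e.fst = e'.fst) ∧
    (∀ u v : V₁, G₁.Adj u v ↔ ∃ e : G₁.Dart, e.fst = u ∧ e.snd = v) ∧
    Nonempty (G₁ ≃g G₂) := by
  classical
  have iterfst₁ : ∀ n (e : G₁.Dart), (rot₁^[n] e).fst = e.fst := by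
    intro n
    induction n with
    | zero => intro e; rfl
    | succ n ih => intro e; rw [Function.iterate_succ_apply', hsrc₁]; exact ih e
  have iterfst₂ : ∀ n (e : G₂.Dart), (rot₂^[n] e).fst = e.fst := by
    intro n
    induction n with
    | zero => intro e; rfl
    | succ n ih => intro e; rw [Function.iterate_succ_apply', hsrc₂]; exact ih e
  have commiter : ∀ n (e : G₁.Dart), Φ (rot₁^[n] e) = rot₂^[n] (Φ e) := by
    intro n
    induction n with
    | zero => intro e; rfl
    | succ n ih =>
      intro e
      rw [Function.iterate_succ_apply', hΦrot, ih, Function.iterate_succ_apply']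
  have hΨrot : ∀ e : G₂.Dart, Φ.symm (rot₂ e) = rot₁ (Φ.symm e) := by
    intro e
    apply Φ.injective
    rw [Φ.apply_symm_apply, hΦrot, Φ.apply_symm_apply]
  have hΨsymm : ∀ e : G₂.Dart, Φ.symm e.symm = (Φ.symm e).symm := by
    intro e
    apply Φ.injective
    rw [Φ.apply_symm_apply, hΦsymm, Φ.apply_symm_apply]
  have commiter' : ∀ n (e : G₂.Dart), Φ.symm (rot₂^[n] e) = rot₁^[n] (Φ.symm e) := by
    intro n
    induction n with
    | zero => intro e; rfl
    | succ n ih =>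
      intro e
      rw [Function.iterate_succ_apply', hΨrot, ih, Function.iterate_succ_apply']
  have part1 : ∀ e e' : G₁.Dart, (∃ n : ℕ, rot₁^[n] e = e') ↔ e.fst = e'.fst := by
    intro e e'
    constructor
    · rintro ⟨n, rfl⟩; exact (iterfst₁ n e).symm
    · exact hcyc₁ e e'
  have part2 : ∀ u v : V₁, G₁.Adj u v ↔ ∃ e : G₁.Dart, e.fst = u ∧ e.snd = v := by
    intro u v
    constructor
    · intro h; exact ⟨⟨(u, v), h⟩, rfl, rfl⟩
    · rintro ⟨e, rfl, rfl⟩; exact e.adj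
  have samefst : ∀ e e' : G₁.Dart, e.fst = e'.fst → (Φ e).fst = (Φ e').fst := by
    intro e e' h
    obtain ⟨n, rfl⟩ := hcyc₁ e e' h
    rw [commiter, iterfst₂]
  have samefst' : ∀ e e' : G₂.Dart, e.fst = e'.fst → (Φ.symm e).fst = (Φ.symm e').fst := by
    intro e e' h
    obtain ⟨n, rfl⟩ := hcyc₂ e e' h
    rw [commiter', iterfst₁]
  have hex₁ : ∀ v : V₁, ∃ e : G₁.Dart, e.fst = v := by
    intro v
    obtain ⟨u, w, huw⟩ := he₁
    obtain ⟨p⟩ := h₁.preconnected v u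
    cases p with
    | nil => exact ⟨⟨(v, w), huw⟩, rfl⟩
    | cons h q => exact ⟨⟨(v, _), h⟩, rfl⟩
  have hex₂ : ∀ v : V₂, ∃ e : G₂.Dart, e.fst = v := by
    intro v
    obtain ⟨u, w, huw⟩ := he₂
    obtain ⟨p⟩ := h₂.preconnected v u
    cases p with
    | nil => exact ⟨⟨(v, w), huw⟩, rfl⟩
    | cons h q => exact ⟨⟨(v, _), h⟩, rfl⟩
  choose d₁ hd₁ using hex₁
  choose d₂ hd₂ using hex₂
  set f : V₁ → V₂ := fun v => (Φ (d₁ v)).fst with hf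
  set g : V₂ → V₁ := fun v => (Φ.symm (d₂ v)).fst with hg
  have keyf : ∀ e : G₁.Dart, f e.fst = (Φ e).fst := fun e => samefst _ _ (hd₁ e.fst)
  have keyg : ∀ e : G₂.Dart, g e.fst = (Φ.symm e).fst := fun e => samefst' _ _ (hd₂ e.fst)
  have hsndf : ∀ e : G₁.Dart, f e.snd = (Φ e).snd := by
    intro e
    have h := keyf e.symm
    rw [hΦsymm] at h
    simpa using h
  have hsndg : ∀ e : G₂.Dart, g e.snd = (Φ.symm e).snd := by
    intro e
    have h := keyg e.symm
    rw [hΨsymm] at h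
    simpa using h
  have left : ∀ v, g (f v) = v := by
    intro v
    have h := keyg (Φ (d₁ v))
    rw [Φ.symm_apply_apply] at h
    have : f v = (Φ (d₁ v)).fst := rfl
    rw [this, h, hd₁]
  have right : ∀ v, f (g v) = v := by
    intro v
    have h := keyf (Φ.symm (d₂ v))
    rw [Φ.apply_symm_apply] at h
    have : g v = (Φ.symm (d₂ v)).fst := rfl
    rw [this, h, hd₂]
  have adj_iff : ∀ u v : V₁, G₁.Adj u v ↔ G₂.Adj (f u) (f v) := by
    intro u v
    constructor
    · intro h
      have ha := (Φ ⟨(u, v), h⟩).adj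
      rw [← keyf ⟨(u, v), h⟩, ← hsndf ⟨(u, v), h⟩] at ha
      exact ha
    · intro h
      have ha := (Φ.symm ⟨(f u, f v), h⟩).adj
      rw [← keyg ⟨(f u, f v), h⟩, ← hsndg ⟨(f u, f v), h⟩] at ha
      have e1 : (⟨(f u, f v), h⟩ : G₂.Dart).fst = f u := rfl
      have e2 : (⟨(f u, f v), h⟩ : G₂.Dart).snd = f v := rfl
      rw [e1, e2, left u] at ha
      have hv : g (f v) = v := left v
      rw [hv] at ha
      exact ha
  exact ⟨part1, part2, ⟨⟨⟨f, g, left, right⟩, fun {u v} => (adj_iff u v).symm⟩⟩⟩
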